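/- Under the hypotheses that f, g : ℝⁿ → ℝ, f is differentiable, convex and β-smooth (β > 0), both gradients of f and g are bounded by G > 0 in norm everywhere, and ⟨∇f(x), ∇g(x)⟩ > ε > 0 for all x in a set S, the following holds: for learning rate η = ε/(βG²) and any finite collection of points x₁, …, x_N ∈ S, the sum ∑ᵢ f(xᵢ - η∇g(xᵢ)) < ∑ᵢ f(xᵢ), provided N ≥ 1. -/

import Mathlib

open scoped RealInnerProductSpace

/-- Remark after Theorem 1: the summed main-task loss over any nonempty finite test set
in `S` strictly decreases after one test-time-training gradient step (learning rate
`η = ε/(βG²)`) on the self-supervised loss at each point. -/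
theorem stmt_5 {n : ℕ} (f g : EuclideanSpace ℝ (Fin n) → ℝ) (β G ε : ℝ)
    (hβ : 0 < β) (hG : 0 < G) (hε : 0 < ε)
    (hdiff : Differentiable ℝ f)
    (hconv : ConvexOn ℝ Set.univ f)
    (hsmooth : ∀ x Δ : EuclideanSpace ℝ (Fin n),
      f (x + Δ) ≤ f x + ⟪gradient f x, Δ⟫ + β / 2 * ‖Δ‖ ^ 2)
    (hGf : ∀ x, ‖gradient f x‖ ≤ G)
    (hGg : ∀ x, ‖gradient g x‖ ≤ G)
    (S : Set (EuclideanSpace ℝ (Fin n)))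
    (hS : ∀ x ∈ S, ⟪gradient f x, gradient g x⟫ > ε)
    (N : ℕ) (hN : 1 ≤ N) (x : Fin N → EuclideanSpace ℝ (Fin n))
    (hx : ∀ i, x i ∈ S) :
    ∑ i, f (x i - (ε / (β * G ^ 2)) • gradient g (x i)) < ∑ i, f (x i) := by
  set η : ℝ := ε / (β * G ^ 2) with hη
  have hηpos : 0 < η := div_pos hε (by positivity)
  have key : ∀ i, f (x i - η • gradient g (x i)) < f (x i) := by
    intro i
    have h1 := hsmooth (x i) (-(η • gradient g (x i)))
    have hxS := hS (x i) (hx i)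
    rw [← sub_eq_add_neg] at h1
    have hin : ⟪gradient f (x i), -(η • gradient g (x i))⟫
        = -(η * ⟪gradient f (x i), gradient g (x i)⟫) := by
      rw [inner_neg_right, real_inner_smul_right]
    have hnorm : ‖-(η • gradient g (x i))‖ ^ 2 ≤ η ^ 2 * G ^ 2 := by
      rw [norm_neg, norm_smul, mul_pow, Real.norm_of_nonneg hηpos.le]
      exact mul_le_mul_of_nonneg_left
        (by nlinarith [hGg (x i), norm_nonneg (gradient g (x i))]) (sq_nonneg η)
    have hip : ε < ⟪gradient f (x i), gradient g (x i)⟫ := hxS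
    have h2 : f (x i - η • gradient g (x i))
        ≤ f (x i) - η * ⟪gradient f (x i), gradient g (x i)⟫ + β / 2 * (η ^ 2 * G ^ 2) := by
      calc f (x i - η • gradient g (x i)) ≤ _ := h1
        _ ≤ _ := by rw [hin]; have hβ2 : (0:ℝ) ≤ β/2 := by positivity
                    nlinarith [hnorm]
    have hηG : β / 2 * (η ^ 2 * G ^ 2) = η * ε / 2 := by
      field_simp [hη]; rw [hη]; field_simp [hβ.ne', hG.ne']
    have : f (x i) - η * ⟪gradient f (x i), gradient g (x i)⟫ + β / 2 * (η ^ 2 * G ^ 2)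
        < f (x i) := by
      rw [hηG]; nlinarith
    linarith
  have hne : (Finset.univ : Finset (Fin N)).Nonempty := by
    simpa [Finset.univ_nonempty_iff] using Fin.pos_iff_nonempty.mp hN
  exact Finset.sum_lt_sum_of_nonempty hne (fun i _ => key i)
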